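/- Let X ⊆ ℝ^d be convex with 0 ∈ X, Euclidean diameter ≤ D, and containing the ball rB for some r > 0. Let δ ∈ (0, r), α = δ/r, X_α = (1−α)X. If each f_t is convex and L-Lipschitz on X, x* ∈ argmin_{x∈X} Σ_t f_t(x), y* = (1−α)x*, and x_t = y_t + δ v_t with y_t ∈ X_α and ‖v_t‖ = 1, then Σ_{t=1}^T (f_t(x_t) − f_t(x*)) ≤ Σ_{t=1}^T (f_t(y_t) − f_t(y*)) + (L + LD/r) δ T. Moreover, y_t + δ v_t ∈ X for all t. -/

import Mathlib

open scoped Pointwise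
/-- Let `X ⊆ ℝ^d` be convex with `0 ∈ X`, diameter at most `D`, and
containing the closed ball of radius `r > 0`. Let `δ ∈ (0, r)`, `α = δ/r`,
`X_α = (1−α)X`. If each `f_t` is convex and `L`-Lipschitz on `X`, `x*` minimizes
`Σ_t f_t` over `X`, `y* = (1−α)x*`, and `x_t = y_t + δ v_t` with `y_t ∈ X_α` and
`‖v_t‖ = 1`, then `y_t + δ v_t ∈ X` for all `t`, and
`Σ_{t=1}^T (f_t(x_t) − f_t(x*)) ≤ Σ_{t=1}^T (f_t(y_t) − f_t(y*)) + (L + LD/r) δ T`. -/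
theorem regret_decomposition_shrunk_domain {d : ℕ}
    (X : Set (EuclideanSpace ℝ (Fin d))) (hX : Convex ℝ X)
    (h0 : (0 : EuclideanSpace ℝ (Fin d)) ∈ X)
    (D L r δ : ℝ) (hr : 0 < r)
    (hD : ∀ x ∈ X, ∀ y ∈ X, ‖x - y‖ ≤ D)
    (hball : Metric.closedBall (0 : EuclideanSpace ℝ (Fin d)) r ⊆ X)
    (hδ : 0 < δ) (hδr : δ < r)
    (T : ℕ) (f : ℕ → EuclideanSpace ℝ (Fin d) → ℝ)
    (hconv : ∀ t, ConvexOn ℝ X (f t))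
    (hlip : ∀ t, ∀ x ∈ X, ∀ y ∈ X, |f t x - f t y| ≤ L * ‖x - y‖)
    (xstar : EuclideanSpace ℝ (Fin d)) (hxstar : xstar ∈ X)
    (hmin : ∀ x ∈ X, ∑ t ∈ Finset.Icc 1 T, f t xstar ≤ ∑ t ∈ Finset.Icc 1 T, f t x)
    (y v : ℕ → EuclideanSpace ℝ (Fin d))
    (hy : ∀ t, y t ∈ (1 - δ / r) • X) (hv : ∀ t, ‖v t‖ = 1) :
    (∀ t, y t + δ • v t ∈ X) ∧
      ∑ t ∈ Finset.Icc 1 T, (f t (y t + δ • v t) - f t xstar)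
        ≤ ∑ t ∈ Finset.Icc 1 T, (f t (y t) - f t ((1 - δ / r) • xstar))
          + (L + L * D / r) * δ * T := by

  have hrne : r ≠ 0 := ne_of_gt hr
  have hα0 : 0 ≤ δ / r := le_of_lt (div_pos hδ hr)
  have hα1 : δ / r ≤ 1 := le_of_lt ((div_lt_one hr).mpr hδr)
  have h1α : 0 ≤ 1 - δ / r := by linarith
  have hsum : 1 - δ / r + δ / r = 1 := by ring
  -- r • v t ∈ X
  have hrv : ∀ t, r • v t ∈ X := by
    intro t
    apply hball
    simp [mem_closedBall_iff_norm, norm_smul, hv t, abs_of_pos hr]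
  have hmem : ∀ t, y t + δ • v t ∈ X := by
    intro t
    obtain ⟨z, hz, hzeq⟩ := hy t
    have := hX hz (hrv t) h1α hα0 hsum
    have heq : (1 - δ / r) • z + (δ / r) • (r • v t) = y t + δ • v t := by
      rw [← hzeq, smul_smul, div_mul_cancel₀ _ hrne]
    rwa [heq] at this
  have hymem : ∀ t, y t ∈ X := by
    intro t
    obtain ⟨z, hz, hzeq⟩ := hy t
    have := hX hz h0 h1α hα0 hsum
    rwa [smul_zero, add_zero, show (1 - δ / r) • z = y t from hzeq] at this
  have hystar : (1 - δ / r) • xstar ∈ X := by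
    have := hX hxstar h0 h1α hα0 hsum
    rwa [smul_zero, add_zero] at this
  refine ⟨hmem, ?_⟩
  have hterm : ∀ t, f t (y t + δ • v t) - f t xstar
      ≤ f t (y t) - f t ((1 - δ / r) • xstar) + (L + L * D / r) * δ := by
    intro t
    have h1 : f t (y t + δ • v t) - f t (y t) ≤ L * δ := by
      have := hlip t _ (hmem t) _ (hymem t)
      have hn : ‖y t + δ • v t - y t‖ = δ := by
        simp [norm_smul, hv t, abs_of_pos hδ]
      calc f t (y t + δ • v t) - f t (y t) ≤ |f t (y t + δ • v t) - f t (y t)| := le_abs_self _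
        _ ≤ L * ‖y t + δ • v t - y t‖ := this
        _ = L * δ := by rw [hn]
    have h2 : f t ((1 - δ / r) • xstar) - f t xstar ≤ L * D / r * δ := by
      have hl := hlip t _ hystar _ hxstar
      have hn : ‖(1 - δ / r) • xstar - xstar‖ = δ / r * ‖xstar‖ := by
        have : (1 - δ / r) • xstar - xstar = -((δ / r) • xstar) := by
          rw [sub_smul, one_smul]; abel
        rw [this, norm_neg, norm_smul, Real.norm_eq_abs, abs_of_nonneg hα0]
      have hxD : ‖xstar‖ ≤ D := by
        have := hD xstar hxstar 0 h0
        simpa using this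
      have hL0 : 0 ≤ L := by
        have h := (abs_nonneg _).trans (hlip 0 (r • v 0) (hrv 0) 0 h0)
        have hn0 : ‖r • v 0 - (0 : EuclideanSpace ℝ (Fin d))‖ = r := by
          simp [norm_smul, hv 0, abs_of_pos hr]
        rw [hn0] at h
        nlinarith
      calc f t ((1 - δ / r) • xstar) - f t xstar ≤ |f t ((1 - δ / r) • xstar) - f t xstar| := le_abs_self _
        _ ≤ L * ‖(1 - δ / r) • xstar - xstar‖ := hl
        _ = L * (δ / r * ‖xstar‖) := by rw [hn]
        _ ≤ L * (δ / r * D) := by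
            apply mul_le_mul_of_nonneg_left _ hL0
            exact mul_le_mul_of_nonneg_left hxD hα0
        _ = L * D / r * δ := by ring
    linarith
  calc ∑ t ∈ Finset.Icc 1 T, (f t (y t + δ • v t) - f t xstar)
      ≤ ∑ t ∈ Finset.Icc 1 T, (f t (y t) - f t ((1 - δ / r) • xstar) + (L + L * D / r) * δ) :=
        Finset.sum_le_sum fun t _ => hterm t
    _ = ∑ t ∈ Finset.Icc 1 T, (f t (y t) - f t ((1 - δ / r) • xstar)) + (L + L * D / r) * δ * T := by
        rw [Finset.sum_add_distrib, Finset.sum_const, Nat.card_Icc]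
        simp [mul_comm]
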